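/- Suppose ‖T(t,s)‖ ≤ Me^{λ̄|t−s|+ε|s|} for all t,s, and f satisfies (F1), (F2), (F3) (with η ≤ 1) and (F4). Then there exists a constant c > 0 such that for every n ∈ ℤ, every t ∈ [n,n+1] and every x ∈ ℝ^d, the backward solution satisfies ‖φ(n,t;x) − T(n,t)x‖ ≤ c‖x‖². -/

import Mathlib

/- STATEMENT 16: A quadratic estimate for the backward solution: there is c > 0
with ‖φ(n,t;x) − T(n,t)x‖ ≤ c ‖x‖² for t ∈ [n, n+1]. -/

noncomputable section

/-- `ℝ^d` -/
abbrev Ed (d : ℕ) := Fin d → ℝ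

open Set MeasureTheory in
lemma gronwall_back_aux {u : ℝ → ℝ} {n t a K : ℝ} (hK : 0 < K)
    (hu : Continuous u) (hpos : ∀ r, 0 ≤ u r)
    (h : ∀ s ∈ Set.Icc n t, u s ≤ a + K * ∫ r in s..t, u r) :
    ∀ s ∈ Set.Icc n t, u s ≤ a * Real.exp (K * (t - s)) := by
  set g : ℝ → ℝ := fun σ => ∫ r in (t - σ)..t, u r with hg
  have hderiv : ∀ σ : ℝ, HasDerivAt g (u (t - σ)) σ := by
    intro σ
    have h1 : HasDerivAt (fun y : ℝ => ∫ r in y..t, u r) (-u (t - σ)) (t - σ) :=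
      intervalIntegral.integral_hasDerivAt_left (hu.intervalIntegrable _ _)
        (hu.stronglyMeasurableAtFilter _ _) hu.continuousAt
    have h2 : HasDerivAt (fun σ : ℝ => t - σ) (-1) σ := by
      simpa using (hasDerivAt_id σ).const_sub t
    rw [show u (t - σ) = -u (t - σ) * -1 by ring]; exact h1.comp σ h2
  have hgcont : Continuous g := continuous_iff_continuousAt.mpr fun σ => (hderiv σ).continuousAt
  have hgnonneg : ∀ σ ∈ Set.Icc (0:ℝ) (t - n), 0 ≤ g σ := by
    intro σ hσ
    exact intervalIntegral.integral_nonneg (by linarith [hσ.1]) fun r _ => hpos r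
  have key : ∀ σ ∈ Set.Icc (0:ℝ) (t - n), ‖g σ‖ ≤ gronwallBound 0 K a (σ - 0) := by
    apply norm_le_gronwallBound_of_norm_deriv_right_le hgcont.continuousOn
      (fun σ _ => (hderiv σ).hasDerivWithinAt)
    · simp [hg]
    · intro σ hσ
      have hmem : t - σ ∈ Set.Icc n t := ⟨by linarith [hσ.2], by linarith [hσ.1]⟩
      have := h (t - σ) hmem
      have hgn : 0 ≤ g σ := hgnonneg σ ⟨hσ.1, hσ.2.le⟩
      rw [Real.norm_eq_abs, Real.norm_eq_abs, abs_of_nonneg (hpos _), abs_of_nonneg hgn]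
      have : u (t - σ) ≤ a + K * g σ := by simpa [hg] using this
      linarith
  intro s hs
  have hσ : t - s ∈ Set.Icc (0:ℝ) (t - n) := ⟨by linarith [hs.2], by linarith [hs.1]⟩
  have hkey := key (t - s) hσ
  rw [Real.norm_eq_abs, abs_of_nonneg (hgnonneg _ hσ)] at hkey
  rw [gronwallBound_of_K_ne_0 hK.ne'] at hkey
  have hus : u s ≤ a + K * g (t - s) := by
    have := h s hs
    simpa [hg, sub_sub_cancel] using this
  have hmul : K * g (t - s) ≤ K * (0 * Real.exp (K * (t - s - 0)) +
      a / K * (Real.exp (K * (t - s - 0)) - 1)) :=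
    mul_le_mul_of_nonneg_left hkey hK.le
  have hfin : K * g (t - s) ≤ a * (Real.exp (K * (t - s)) - 1) := by
    rw [show K * (0 * Real.exp (K * (t - s - 0)) + a / K * (Real.exp (K * (t - s - 0)) - 1))
        = a * (Real.exp (K * (t - s)) - 1) by field_simp; simp] at hmul
    exact hmul
  linarith


theorem backward_solution_quadratic_estimate (d : ℕ)
    -- the linear equation x' = A(t)x and its evolution family T(t,s)
    (A : ℝ → Ed d →L[ℝ] Ed d) (T : ℝ → ℝ → Ed d →L[ℝ] Ed d)
    (hT_id : ∀ t, T t t = ContinuousLinearMap.id ℝ (Ed d))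
    (hT_comp : ∀ t s r, (T t s).comp (T s r) = T t r)
    (hT_deriv : ∀ s x t, HasDerivAt (fun τ => T τ s x) (A t (T t s x)) t)
    (M lamBar eps η : ℝ) (hM : 0 < M) (hlamBar : 0 < lamBar) (heps : 0 ≤ eps)
    (hη : 0 < η) (hη1 : η ≤ 1)
    (hgrowth : ∀ t s, ‖T t s‖ ≤ M * Real.exp (lamBar * |t - s| + eps * |s|))
    -- the perturbation f, continuous, C¹ in x with jointly continuous derivative
    (f : ℝ → Ed d → Ed d) (Df : ℝ → Ed d → (Ed d →L[ℝ] Ed d))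
    (hf_cont : Continuous (fun p : ℝ × Ed d => f p.1 p.2))
    (hf_diff : ∀ t x, HasFDerivAt (f t) (Df t x) x)
    (hDf_cont : Continuous (fun p : ℝ × Ed d => Df p.1 p.2))
    -- (F1), (F2), (F3), (F4)
    (B : ℝ) (hB : 0 < B)
    (hF1 : ∀ t, f t 0 = 0)
    (hF2 : ∀ t, Df t 0 = 0)
    (hF3 : ∀ t x, ‖Df t x‖ ≤ η * Real.exp (-3 * eps * |t|))
    (hF4 : ∀ t x y, ‖Df t x - Df t y‖ ≤ B * Real.exp (-4 * eps * |t|) * ‖x - y‖)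
    -- φ(t,t₀;x): the globally defined solution of x' = A(t)x + f(t,x), C¹ in x,
    -- satisfying the variation-of-parameters formula
    (φ : ℝ → ℝ → Ed d → Ed d) (Dφ : ℝ → ℝ → Ed d → (Ed d →L[ℝ] Ed d))
    (hφ_init : ∀ t₀ x, φ t₀ t₀ x = x)
    (hφ_sol : ∀ t₀ x t, HasDerivAt (fun τ => φ τ t₀ x) (A t (φ t t₀ x) + f t (φ t t₀ x)) t)
    (hφ_diff : ∀ t t₀ x, HasFDerivAt (φ t t₀) (Dφ t t₀ x) x)
    (hvop : ∀ t t₀ x, φ t t₀ x = T t t₀ x + ∫ s in t₀..t, T t s (f s (φ s t₀ x))) :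
    -- then there is c > 0 with ‖φ(n,t;x) − T(n,t)x‖ ≤ c ‖x‖²
    -- for all n ∈ ℤ, t ∈ [n, n+1] and x ∈ ℝ^d
    ∃ c : ℝ, 0 < c ∧
      ∀ (n : ℤ) (t : ℝ) (x : Ed d), t ∈ Set.Icc (n : ℝ) ((n : ℝ) + 1) →
        ‖φ (n : ℝ) t x - T (n : ℝ) t x‖ ≤ c * ‖x‖ ^ 2 := by
  open Set MeasureTheory in
  have f_lin : ∀ s y, ‖f s y‖ ≤ η * Real.exp (-3 * eps * |s|) * ‖y‖ := by
    intro s y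
    have := (convex_univ :
        Convex ℝ (Set.univ : Set (Ed d))).norm_image_sub_le_of_norm_hasFDerivWithin_le
      (fun z _ => (hf_diff s z).hasFDerivWithinAt) (fun z _ => hF3 s z)
      (Set.mem_univ 0) (Set.mem_univ y)
    simpa [hF1 s] using this
  have f_quad : ∀ s y, ‖f s y‖ ≤ B * Real.exp (-4 * eps * |s|) * ‖y‖ * ‖y‖ := by
    intro s y
    have hball : Convex ℝ (Metric.closedBall (0 : Ed d) ‖y‖) := convex_closedBall _ _
    have hb : ∀ z ∈ Metric.closedBall (0 : Ed d) ‖y‖,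
        ‖Df s z‖ ≤ B * Real.exp (-4 * eps * |s|) * ‖y‖ := by
      intro z hz
      have h1 := hF4 s z 0
      rw [hF2 s, sub_zero, sub_zero] at h1
      have h2 : ‖z‖ ≤ ‖y‖ := by simpa using hz
      calc ‖Df s z‖ ≤ B * Real.exp (-4 * eps * |s|) * ‖z‖ := h1
        _ ≤ B * Real.exp (-4 * eps * |s|) * ‖y‖ := by gcongr
    have hy : y ∈ Metric.closedBall (0 : Ed d) ‖y‖ := by
      simp [Metric.mem_closedBall, dist_eq_norm]
    have := hball.norm_image_sub_le_of_norm_hasFDerivWithin_le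
      (fun z _ => (hf_diff s z).hasFDerivWithinAt) hb
      (Metric.mem_closedBall_self (norm_nonneg y)) hy
    simpa [hF1 s] using this
  set K0 : ℝ := M * Real.exp lamBar with hK0
  have hK0pos : 0 < K0 := by positivity
  refine ⟨M * Real.exp lamBar * B * (K0 * Real.exp K0) ^ 2 * Real.exp (2 * eps),
    by positivity, ?_⟩
  intro n t x ht
  have hnt : (n : ℝ) ≤ t := ht.1
  have htn1 : t ≤ (n : ℝ) + 1 := ht.2
  have hφcont : Continuous (fun s => φ s t x) :=
    continuous_iff_continuousAt.mpr fun s => (hφ_sol t x s).continuousAt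
  have hucont : Continuous (fun s => ‖φ s t x‖) := hφcont.norm
  have ha_nonneg : 0 ≤ K0 * Real.exp (eps * |t|) * ‖x‖ := by positivity
  -- Gronwall hypothesis
  have hgron : ∀ s ∈ Set.Icc (n : ℝ) t,
      ‖φ s t x‖ ≤ K0 * Real.exp (eps * |t|) * ‖x‖ + K0 * ∫ r in s..t, ‖φ r t x‖ := by
    intro s hs
    have hvs := hvop s t x
    have hstep1 : ‖φ s t x‖ ≤ ‖T s t x‖ + ‖∫ r in t..s, T s r (f r (φ r t x))‖ := by
      rw [hvs]; exact norm_add_le _ _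
    have hst1 : |s - t| ≤ 1 := by
      rw [abs_sub_comm, abs_of_nonneg (by linarith [hs.2] : (0:ℝ) ≤ t - s)]
      linarith [hs.1]
    have hTst : ‖T s t x‖ ≤ K0 * Real.exp (eps * |t|) * ‖x‖ := by
      calc ‖T s t x‖ ≤ ‖T s t‖ * ‖x‖ := (T s t).le_opNorm x
        _ ≤ M * Real.exp (lamBar * |s - t| + eps * |t|) * ‖x‖ := by
            gcongr; exact hgrowth s t
        _ ≤ M * Real.exp (lamBar + eps * |t|) * ‖x‖ := by
            gcongr
            nlinarith [abs_nonneg (s - t)]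
        _ = K0 * Real.exp (eps * |t|) * ‖x‖ := by rw [hK0, Real.exp_add]; ring
    have hint : ‖∫ r in t..s, T s r (f r (φ r t x))‖ ≤ K0 * ∫ r in s..t, ‖φ r t x‖ := by
      rw [intervalIntegral.integral_symm s t, norm_neg]
      have hb : ∀ᵐ r ∂volume.restrict (Set.uIoc s t),
          ‖T s r (f r (φ r t x))‖ ≤ K0 * ‖φ r t x‖ := by
        refine (ae_restrict_mem measurableSet_uIoc).mono ?_
        intro r hr
        rw [Set.uIoc_of_le hs.2] at hr
        have hsr : |s - r| ≤ 1 := by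
          rw [abs_sub_comm, abs_of_nonneg (by linarith [hr.1.le] : (0:ℝ) ≤ r - s)]
          linarith [hs.1, hr.2]
        have hE : Real.exp (lamBar * |s - r| + eps * |r|) * Real.exp (-3 * eps * |r|)
            ≤ Real.exp lamBar := by
          rw [← Real.exp_add]
          apply Real.exp_le_exp.mpr
          nlinarith [mul_nonneg heps (abs_nonneg r), hlamBar.le]
        calc ‖T s r (f r (φ r t x))‖ ≤ ‖T s r‖ * ‖f r (φ r t x)‖ := (T s r).le_opNorm _
          _ ≤ (M * Real.exp (lamBar * |s - r| + eps * |r|)) *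
              (η * Real.exp (-3 * eps * |r|) * ‖φ r t x‖) :=
            mul_le_mul (hgrowth s r) (f_lin r _) (norm_nonneg _) (by positivity)
          _ = M * η * (Real.exp (lamBar * |s - r| + eps * |r|) *
              Real.exp (-3 * eps * |r|)) * ‖φ r t x‖ := by ring
          _ ≤ M * 1 * Real.exp lamBar * ‖φ r t x‖ := by gcongr
          _ = K0 * ‖φ r t x‖ := by rw [hK0]; ring
      have hle := intervalIntegral.norm_integral_le_abs_of_norm_le hb
        ((continuous_const.mul hucont).intervalIntegrable s t)
      rw [intervalIntegral.integral_const_mul] at hle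
      rwa [abs_of_nonneg (mul_nonneg hK0pos.le
        (intervalIntegral.integral_nonneg hs.2 fun r _ => norm_nonneg _))] at hle
    calc ‖φ s t x‖ ≤ ‖T s t x‖ + ‖∫ r in t..s, T s r (f r (φ r t x))‖ := hstep1
      _ ≤ K0 * Real.exp (eps * |t|) * ‖x‖ + K0 * ∫ r in s..t, ‖φ r t x‖ :=
        add_le_add hTst hint
  have hgb := gronwall_back_aux hK0pos hucont (fun r => norm_nonneg _) hgron
  have hub : ∀ s ∈ Set.Icc (n : ℝ) t,
      ‖φ s t x‖ ≤ K0 * Real.exp (eps * |t|) * ‖x‖ * Real.exp K0 := by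
    intro s hs
    refine (hgb s hs).trans ?_
    gcongr
    nlinarith [hs.1, hK0pos.le]
  -- final estimate
  have hvn := hvop (n : ℝ) t x
  have heq : φ (n : ℝ) t x - T (n : ℝ) t x
      = ∫ s in t..(n : ℝ), T (n : ℝ) s (f s (φ s t x)) := by
    rw [hvn, add_sub_cancel_left]
  rw [heq, intervalIntegral.integral_symm (n : ℝ) t, norm_neg]
  have hptwise : ∀ s ∈ Set.uIoc (n : ℝ) t,
      ‖T (n : ℝ) s (f s (φ s t x))‖ ≤
        M * Real.exp lamBar * B * (K0 * Real.exp K0) ^ 2 * Real.exp (2 * eps) * ‖x‖ ^ 2 := by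
    intro s hsm
    rw [Set.uIoc_of_le hnt] at hsm
    have hsmem : s ∈ Set.Icc (n : ℝ) t := ⟨hsm.1.le, hsm.2⟩
    have hns : |(n : ℝ) - s| ≤ 1 := by
      rw [abs_sub_comm, abs_of_nonneg (by linarith [hsm.1.le] : (0:ℝ) ≤ s - (n:ℝ))]
      linarith [hsm.2]
    have hts : |t| ≤ |s| + 1 := by
      have : |t - s| ≤ 1 := by
        rw [abs_of_nonneg (by linarith [hsm.2] : (0:ℝ) ≤ t - s)]
        linarith [hsm.1.le]
      calc |t| = |s + (t - s)| := by ring_nf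
        _ ≤ |s| + |t - s| := abs_add_le _ _
        _ ≤ |s| + 1 := by linarith
    have hE : Real.exp (lamBar * |(n : ℝ) - s| + eps * |s|) * Real.exp (-4 * eps * |s|) *
        (Real.exp (eps * |t|) * Real.exp (eps * |t|))
        ≤ Real.exp lamBar * Real.exp (2 * eps) := by
      rw [← Real.exp_add, ← Real.exp_add, ← Real.exp_add, ← Real.exp_add]
      apply Real.exp_le_exp.mpr
      have h1 : lamBar * |(n : ℝ) - s| ≤ lamBar * 1 := by
        exact mul_le_mul_of_nonneg_left hns hlamBar.le
      have h2 : eps * |t| ≤ eps * (|s| + 1) := mul_le_mul_of_nonneg_left hts heps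
      have h3 : 0 ≤ eps * |s| := mul_nonneg heps (abs_nonneg s)
      nlinarith
    have hubs := hub s hsmem
    calc ‖T (n : ℝ) s (f s (φ s t x))‖
        ≤ ‖T (n : ℝ) s‖ * ‖f s (φ s t x)‖ := (T (n : ℝ) s).le_opNorm _
      _ ≤ (M * Real.exp (lamBar * |(n : ℝ) - s| + eps * |s|)) *
          (B * Real.exp (-4 * eps * |s|) * ‖φ s t x‖ * ‖φ s t x‖) :=
        mul_le_mul (hgrowth _ s) (f_quad s _) (norm_nonneg _) (by positivity)
      _ ≤ (M * Real.exp (lamBar * |(n : ℝ) - s| + eps * |s|)) *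
          (B * Real.exp (-4 * eps * |s|) *
            (K0 * Real.exp (eps * |t|) * ‖x‖ * Real.exp K0) *
            (K0 * Real.exp (eps * |t|) * ‖x‖ * Real.exp K0)) := by gcongr
      _ = M * B * (K0 * Real.exp K0) ^ 2 *
          (Real.exp (lamBar * |(n : ℝ) - s| + eps * |s|) * Real.exp (-4 * eps * |s|) *
            (Real.exp (eps * |t|) * Real.exp (eps * |t|))) * ‖x‖ ^ 2 := by ring
      _ ≤ M * B * (K0 * Real.exp K0) ^ 2 *
          (Real.exp lamBar * Real.exp (2 * eps)) * ‖x‖ ^ 2 := by gcongr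
      _ = M * Real.exp lamBar * B * (K0 * Real.exp K0) ^ 2 * Real.exp (2 * eps) * ‖x‖ ^ 2 := by
          ring
  have hfinal := intervalIntegral.norm_integral_le_of_norm_le_const hptwise
  refine hfinal.trans ?_
  have htn : |t - (n : ℝ)| ≤ 1 := by
    rw [abs_of_nonneg (by linarith : (0:ℝ) ≤ t - (n:ℝ))]
    linarith
  calc M * Real.exp lamBar * B * (K0 * Real.exp K0) ^ 2 * Real.exp (2 * eps) * ‖x‖ ^ 2 *
        |t - (n : ℝ)|
      ≤ M * Real.exp lamBar * B * (K0 * Real.exp K0) ^ 2 * Real.exp (2 * eps) * ‖x‖ ^ 2 * 1 := by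
        gcongr
    _ = M * Real.exp lamBar * B * (K0 * Real.exp K0) ^ 2 * Real.exp (2 * eps) * ‖x‖ ^ 2 := by
        ring


end
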